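/- arXiv:2302.03513 — 3 statements merged into one kernel-verified Lean document; each statement's English description precedes it below -/
import Mathlib

section
/- (Kim) Let U ⊆ ℂ be a bounded convex open set of diameter ℓ and let a_1,…,a_n be holomorphic functions on U with |a_k(z)| ≤ A_k for all z ∈ U, where Σ_{k=1}^n A_k · ℓ^k / k! < 1. Let f be holomorphic on U and continuous on the closure of U, satisfying f^{(n)}(z) + a_1(z) f^{(n−1)}(z) + ⋯ + a_n(z) f(z) = 0 for all z ∈ U. If f has at least n zeros in U counted with multiplicities, then f is identically zero. Equivalently, every nontrivial holomorphic solution of the equation has at most n − 1 zeros in U counted with multiplicities. -/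
open Set Metric intervalIntegral Filter Topology

private lemma itD_diffOn {V : Set ℂ} (hVo : IsOpen V) {f : ℂ → ℂ}
    (hf : DifferentiableOn ℂ f V) (m : ℕ) :
    DifferentiableOn ℂ (iteratedDeriv m f) V := by
  induction m with
  | zero => simpa [iteratedDeriv_zero] using hf
  | succ m ih =>
    rw [iteratedDeriv_succ]
    exact ((ih.analyticOnNhd hVo).deriv).differentiableOn

private lemma itD_hasDerivAt {V : Set ℂ} (hVo : IsOpen V) {f : ℂ → ℂ}
    (hf : DifferentiableOn ℂ f V) (m : ℕ) {x : ℂ} (hx : x ∈ V) :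
    HasDerivAt (iteratedDeriv m f) (iteratedDeriv (m + 1) f x) x := by
  have h := (itD_diffOn hVo hf m x hx).differentiableAt (hVo.mem_nhds hx)
  rw [iteratedDeriv_succ]
  exact h.hasDerivAt

private lemma prod_identity {V : Set ℂ} (hVo : IsOpen V) {g : ℂ → ℂ}
    (hg : DifferentiableOn ℂ g V) (w : ℂ) (m : ℕ) {x : ℂ} (hx : x ∈ V) :
    iteratedDeriv m (fun z => (z - w) * g z) x
      = (x - w) * iteratedDeriv m g x + (m : ℂ) * iteratedDeriv (m - 1) g x := by
  induction m generalizing x with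
  | zero => simp [iteratedDeriv_zero]
  | succ m ih =>
    rw [iteratedDeriv_succ]
    have hEq : Set.EqOn (iteratedDeriv m fun z => (z - w) * g z)
        (fun y => (y - w) * iteratedDeriv m g y + (m : ℂ) * iteratedDeriv (m - 1) g y) V :=
      fun y hy => ih hy
    have hd : deriv (iteratedDeriv m fun z => (z - w) * g z) x
        = deriv (fun y => (y - w) * iteratedDeriv m g y + (m : ℂ) * iteratedDeriv (m - 1) g y) x :=
      Filter.EventuallyEq.deriv_eq (hEq.eventuallyEq_of_mem (hVo.mem_nhds hx))
    rw [hd]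
    have h1 : HasDerivAt (fun y => (y - w) * iteratedDeriv m g y)
        (1 * iteratedDeriv m g x + (x - w) * iteratedDeriv (m + 1) g x) x :=
      ((hasDerivAt_id x).sub_const w).mul (itD_hasDerivAt hVo hg m hx)
    have h2 : HasDerivAt (fun y => (m : ℂ) * iteratedDeriv (m - 1) g y)
        ((m : ℂ) * iteratedDeriv m g x) x := by
      cases m with
      | zero => simpa using hasDerivAt_const x (0 : ℂ)
      | succ k => simpa using ((itD_hasDerivAt hVo hg k hx).const_mul ((k : ℂ) + 1))
    rw [(h1.fun_add h2).deriv]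
    push_cast
    ring

private lemma dslope_diffOn {V : Set ℂ} (hVo : IsOpen V) {f : ℂ → ℂ}
    (hf : DifferentiableOn ℂ f V) (w : ℂ) :
    DifferentiableOn ℂ (dslope f w) V := by
  intro x hx
  rcases eq_or_ne x w with rfl | hne
  · obtain ⟨p, hp⟩ := (hf.analyticOnNhd hVo) x hx
    exact hp.has_fpower_series_dslope_fslope.analyticAt.differentiableAt.differentiableWithinAt
  · exact (differentiableWithinAt_dslope_of_ne hne).2 (hf x hx)

private lemma dslope_factor {f : ℂ → ℂ} {w : ℂ} (hfw : f w = 0) (z : ℂ) :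
    f z = (z - w) * dslope f w z := by
  have h := sub_smul_dslope f w z
  rw [hfw, sub_zero, smul_eq_mul] at h
  exact h.symm

/-- the iterated-derivative identity `f^{(j)} = (z-w) g^{(j)} + j g^{(j-1)}` for `g = dslope f w`. -/
private lemma dslope_itD_identity {V : Set ℂ} (hVo : IsOpen V) {f : ℂ → ℂ}
    (hf : DifferentiableOn ℂ f V) {w : ℂ} (hfw : f w = 0) (j : ℕ) {x : ℂ} (hx : x ∈ V) :
    iteratedDeriv j f x = (x - w) * iteratedDeriv j (dslope f w) x
      + (j : ℂ) * iteratedDeriv (j - 1) (dslope f w) x := by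
  have hg := dslope_diffOn hVo hf w
  have : f = fun z => (z - w) * dslope f w z := funext (dslope_factor hfw)
  conv_lhs => rw [this]
  exact prod_identity hVo hg w j hx

private lemma dslope_vanish_same {V : Set ℂ} (hVo : IsOpen V) {f : ℂ → ℂ}
    (hf : DifferentiableOn ℂ f V) {w : ℂ} (hfw : f w = 0)
    (hw : w ∈ V) (c : ℕ)
    (hc : ∀ j < c + 1, iteratedDeriv j f w = 0) :
    ∀ j < c, iteratedDeriv j (dslope f w) w = 0 := by
  intro j hj
  have h := hc (j + 1) (by omega)
  rw [dslope_itD_identity hVo hf hfw (j + 1) hw] at h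
  simp only [sub_self, zero_mul, zero_add, Nat.add_sub_cancel] at h
  have hne : ((j + 1 : ℕ) : ℂ) ≠ 0 := Nat.cast_ne_zero.2 (Nat.succ_ne_zero j)
  have h' : ((j + 1 : ℕ) : ℂ) * iteratedDeriv j (dslope f w) w = 0 := by
    exact_mod_cast h
  exact (mul_eq_zero.1 h').resolve_left hne

private lemma dslope_vanish_ne {V : Set ℂ} (hVo : IsOpen V) {f : ℂ → ℂ}
    (hf : DifferentiableOn ℂ f V) {w : ℂ} (hfw : f w = 0)
    {p : ℂ} (hp : p ∈ V) (hne : p ≠ w) (c : ℕ)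
    (hc : ∀ j < c, iteratedDeriv j f p = 0) :
    ∀ j < c, iteratedDeriv j (dslope f w) p = 0 := by
  intro j
  induction j using Nat.strong_induction_on with
  | _ j IHj =>
    intro hj
    have h := hc j hj
    rw [dslope_itD_identity hVo hf hfw j hp] at h
    have hsub : p - w ≠ 0 := sub_ne_zero.2 hne
    cases j with
    | zero =>
      simp only [Nat.cast_zero, zero_mul, add_zero] at h
      exact (mul_eq_zero.1 h).resolve_left hsub
    | succ k =>
      rw [Nat.add_sub_cancel, IHj k (by omega) (by omega)] at h
      simp only [mul_zero, add_zero] at h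
      exact (mul_eq_zero.1 h).resolve_left hsub

/-- points of the segment used below lie in `V` -/
private lemma seg_mem {V : Set ℂ} (hVc : Convex ℝ V) {w x : ℂ} (hw : w ∈ V) (hx : x ∈ V)
    {t : ℝ} (ht0 : 0 ≤ t) (ht1 : t ≤ 1) : w + (t : ℂ) * (x - w) ∈ V := by
  have h := hVc hw hx (a := 1 - t) (b := t) (by linarith) ht0 (by ring)
  have : (1 - t) • w + t • x = w + (t : ℂ) * (x - w) := by
    simp only [Complex.real_smul]
    push_cast
    ring
  rwa [this] at h

private lemma phi_hasDerivAt {V : Set ℂ} (hVo : IsOpen V) (hVc : Convex ℝ V)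
    {h : ℂ → ℂ} (hh : DifferentiableOn ℂ h V) {w : ℂ} (hw : w ∈ V) (m : ℕ)
    {x₀ : ℂ} (hx₀ : x₀ ∈ V) :
    HasDerivAt (fun x => ∫ t in (0:ℝ)..1, (t : ℂ) ^ m * h (w + (t : ℂ) * (x - w)))
      (∫ t in (0:ℝ)..1, (t : ℂ) ^ (m + 1) * deriv h (w + (t : ℂ) * (x₀ - w))) x₀ := by
  obtain ⟨r, hr, hball⟩ := Metric.isOpen_iff.1 hVo x₀ hx₀
  have hεdef : ∃ e : ℝ, e = r / 2 := ⟨r/2, rfl⟩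
  obtain ⟨ε, hεdef⟩ := hεdef
  have hε : 0 < ε := by rw [hεdef]; positivity
  have hcb : closedBall x₀ ε ⊆ V := fun y hy => by
    apply hball
    simp only [mem_ball, mem_closedBall] at *
    have : ε < r := by rw [hεdef]; linarith
    linarith
  -- compact set containing all segments
  set K : Set ℂ := (fun p : ℝ × ℂ => w + (p.1 : ℂ) * (p.2 - w)) '' ((Icc 0 1) ×ˢ closedBall x₀ ε)
    with hKdef
  have hKc : IsCompact K :=
    (isCompact_Icc.prod (isCompact_closedBall x₀ ε)).image (by fun_prop)
  have hKV : K ⊆ V := by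
    rintro _ ⟨⟨t, y⟩, ⟨⟨ht0, ht1⟩, hy⟩, rfl⟩
    exact seg_mem hVc hw (hcb hy) ht0 ht1
  have hdc : ContinuousOn (deriv h) V := ((hh.analyticOnNhd hVo).deriv).continuousOn
  obtain ⟨C, hC⟩ := hKc.exists_bound_of_continuousOn (hdc.mono hKV)
  have hC0 : 0 ≤ C := le_trans (norm_nonneg _) (hC (w + (1 : ℂ) * (x₀ - w))
    ⟨(1, x₀), ⟨⟨zero_le_one, le_refl 1⟩, mem_closedBall_self hε.le⟩, by norm_num⟩)
  have hmem : ∀ {x : ℂ}, x ∈ closedBall x₀ ε → ∀ {t : ℝ}, t ∈ Icc (0:ℝ) 1 →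
      (w + (t : ℂ) * (x - w)) ∈ K := by
    intro x hx t ht
    exact ⟨(t, x), ⟨ht, hx⟩, rfl⟩
  have hIoc : uIoc (0:ℝ) 1 = Ioc (0:ℝ) 1 := uIoc_of_le zero_le_one
  have hccont : ContinuousOn h V := hh.continuousOn
  have key := intervalIntegral.hasDerivAt_integral_of_dominated_loc_of_deriv_le
      (F := fun x t => (t : ℂ) ^ m * h (w + (t : ℂ) * (x - w)))
      (F' := fun x t => (t : ℂ) ^ (m + 1) * deriv h (w + (t : ℂ) * (x - w)))
      (x₀ := x₀) (a := 0) (b := 1) (μ := MeasureTheory.volume) (bound := fun _ => C)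
      (Metric.ball_mem_nhds x₀ hε)
      ?_ ?_ ?_ ?_ ?_ ?_
  · exact key.2
  · -- measurability of F x for x near x₀
    filter_upwards [Metric.ball_mem_nhds x₀ hε] with x hx
    apply ContinuousOn.aestronglyMeasurable _ measurableSet_uIoc
    rw [hIoc]
    apply ContinuousOn.mul (by fun_prop)
    apply hccont.comp (by fun_prop)
    intro t ht
    exact seg_mem hVc hw (hcb (ball_subset_closedBall hx)) ht.1.le ht.2
  · -- interval integrability of F x₀
    apply ContinuousOn.intervalIntegrable
    apply ContinuousOn.mul (by fun_prop)
    apply hccont.comp (by fun_prop)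
    intro t ht
    rw [uIcc_of_le zero_le_one] at ht
    exact seg_mem hVc hw hx₀ ht.1 ht.2
  · -- measurability of F' x₀
    apply ContinuousOn.aestronglyMeasurable _ measurableSet_uIoc
    rw [hIoc]
    apply ContinuousOn.mul (by fun_prop)
    apply hdc.comp (by fun_prop)
    intro t ht
    exact seg_mem hVc hw hx₀ ht.1.le ht.2
  · -- bound
    apply Filter.Eventually.of_forall
    intro t ht x hx
    rw [hIoc] at ht
    have hK' := hmem (ball_subset_closedBall hx) (⟨ht.1.le, ht.2⟩ : t ∈ Icc (0:ℝ) 1)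
    have h1 : ‖(t : ℂ) ^ (m + 1)‖ ≤ 1 := by
      rw [norm_pow, Complex.norm_real, Real.norm_eq_abs]
      exact pow_le_one₀ (abs_nonneg t) (by rw [abs_of_nonneg ht.1.le]; exact ht.2)
    calc ‖(t : ℂ) ^ (m + 1) * deriv h (w + (t : ℂ) * (x - w))‖
        = ‖(t : ℂ) ^ (m + 1)‖ * ‖deriv h (w + (t : ℂ) * (x - w))‖ := norm_mul _ _
      _ ≤ 1 * C := mul_le_mul h1 (hC _ hK') (norm_nonneg _) zero_le_one
      _ = C := one_mul C
  · exact intervalIntegrable_const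
  · -- differentiability in x
    apply Filter.Eventually.of_forall
    intro t ht x hx
    rw [hIoc] at ht
    have hxV : x ∈ V := hcb (ball_subset_closedBall hx)
    have hseg : w + (t : ℂ) * (x - w) ∈ V := seg_mem hVc hw hxV ht.1.le ht.2
    have hdh : HasDerivAt h (deriv h (w + (t : ℂ) * (x - w))) (w + (t : ℂ) * (x - w)) :=
      ((hh _ hseg).differentiableAt (hVo.mem_nhds hseg)).hasDerivAt
    have hu : HasDerivAt (fun x : ℂ => w + (t : ℂ) * (x - w)) (t : ℂ) x := by
      simpa using (((hasDerivAt_id x).sub_const w).const_mul (t : ℂ)).const_add w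
    have hcomp := hdh.comp x hu
    have := hcomp.const_mul ((t : ℂ) ^ m)
    exact this.congr_deriv (by ring)

private lemma dslope_itD_integral {V : Set ℂ} (hVo : IsOpen V) (hVc : Convex ℝ V)
    {f : ℂ → ℂ} (hf : DifferentiableOn ℂ f V) {w : ℂ} (hw : w ∈ V) (hfw : f w = 0)
    (m : ℕ) {x : ℂ} (hx : x ∈ V) :
    iteratedDeriv m (dslope f w) x
      = ∫ t in (0:ℝ)..1, (t : ℂ) ^ m * iteratedDeriv (m + 1) f (w + (t : ℂ) * (x - w)) := by
  induction m generalizing x with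
  | zero =>
    have hdc : ContinuousOn (deriv f) V := ((hf.analyticOnNhd hVo).deriv).continuousOn
    have hseg : ∀ t ∈ uIcc (0:ℝ) 1, w + (t : ℂ) * (x - w) ∈ V := by
      intro t ht
      rw [uIcc_of_le zero_le_one] at ht
      exact seg_mem hVc hw hx ht.1 ht.2
    have hderiv : ∀ t ∈ uIcc (0:ℝ) 1,
        HasDerivAt (fun s : ℝ => f (w + (s : ℂ) * (x - w)))
          ((x - w) * deriv f (w + (t : ℂ) * (x - w))) t := by
      intro t ht
      have hV := hseg t ht
      have hdf : HasDerivAt f (deriv f (w + (t : ℂ) * (x - w))) (w + (t : ℂ) * (x - w)) :=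
        ((hf _ hV).differentiableAt (hVo.mem_nhds hV)).hasDerivAt
      have hu : HasDerivAt (fun s : ℝ => w + (s : ℂ) * (x - w)) (x - w) t := by
        have h1 : HasDerivAt (fun s : ℝ => (s : ℂ)) 1 t := by
          exact Complex.ofRealCLM.hasDerivAt (x := t)
        simpa using ((h1.mul_const (x - w)).const_add w)
      have := (hdf.hasFDerivAt.restrictScalars ℝ).comp_hasDerivAt t hu
      exact this.congr_deriv (by simp [mul_comm])
    have hint : IntervalIntegrable
        (fun t : ℝ => (x - w) * deriv f (w + (t : ℂ) * (x - w))) MeasureTheory.volume 0 1 := by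
      apply ContinuousOn.intervalIntegrable
      exact (continuousOn_const.mul ((hdc.comp (by fun_prop) hseg)))
    have key := intervalIntegral.integral_eq_sub_of_hasDerivAt hderiv hint
    simp only [Complex.ofReal_one, Complex.ofReal_zero, one_mul, zero_mul, add_sub_cancel,
      add_zero, hfw, sub_zero] at key
    -- key : ∫ t in 0..1, (x - w) * deriv f (w + t(x-w)) = f x
    rw [intervalIntegral.integral_const_mul] at key
    simp only [iteratedDeriv_zero, zero_add, iteratedDeriv_one, pow_zero, one_mul]
    rcases eq_or_ne x w with rfl | hne
    · rw [dslope_same]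
      have hsimp : ∀ t : ℝ, x + (t : ℂ) * (x - x) = x := fun t => by ring
      simp only [hsimp, intervalIntegral.integral_const, sub_zero, one_smul]
    · have hsub : x - w ≠ 0 := sub_ne_zero.2 hne
      rw [dslope_of_ne f hne, slope_def_field]
      field_simp [hfw] at key ⊢
      rw [hfw, ← key]
      ring
  | succ m ih =>
    have hEq : Set.EqOn (iteratedDeriv m (dslope f w))
        (fun x => ∫ t in (0:ℝ)..1, (t : ℂ) ^ m * iteratedDeriv (m + 1) f (w + (t : ℂ) * (x - w)))
        V := fun y hy => ih hy
    have hD := phi_hasDerivAt hVo hVc (itD_diffOn hVo hf (m + 1)) hw m hx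
    rw [iteratedDeriv_succ]
    rw [Filter.EventuallyEq.deriv_eq (hEq.eventuallyEq_of_mem (hVo.mem_nhds hx)), hD.deriv]
    rw [show iteratedDeriv (m + 1 + 1) f = deriv (iteratedDeriv (m + 1) f) from iteratedDeriv_succ]

private lemma dslope_bound {V : Set ℂ} (hVo : IsOpen V) (hVc : Convex ℝ V)
    {f : ℂ → ℂ} (hf : DifferentiableOn ℂ f V) {w : ℂ} (hw : w ∈ V) (hfw : f w = 0)
    (m : ℕ) {S : ℝ} (hS : ∀ z ∈ V, ‖iteratedDeriv (m + 1) f z‖ ≤ S)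
    {x : ℂ} (hx : x ∈ V) :
    ‖iteratedDeriv m (dslope f w) x‖ ≤ S / (m + 1) := by
  rw [dslope_itD_integral hVo hVc hf hw hfw m hx]
  have hbound : ∀ t ∈ uIoc (0:ℝ) 1,
      ‖(t : ℂ) ^ m * iteratedDeriv (m + 1) f (w + (t : ℂ) * (x - w))‖ ≤ t ^ m * S := by
    intro t ht
    rw [uIoc_of_le zero_le_one] at ht
    have hV : w + (t : ℂ) * (x - w) ∈ V := seg_mem hVc hw hx ht.1.le ht.2
    rw [norm_mul, norm_pow, Complex.norm_real, Real.norm_eq_abs, abs_of_nonneg ht.1.le]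
    exact mul_le_mul_of_nonneg_left (hS _ hV) (pow_nonneg ht.1.le m)
  have hintg : IntervalIntegrable (fun t : ℝ => t ^ m * S) MeasureTheory.volume 0 1 :=
    (continuous_pow m |>.mul continuous_const).intervalIntegrable 0 1
  have hS0 : 0 ≤ S := le_trans (norm_nonneg _) (hS x hx)
  have h1 : ‖∫ t in (0:ℝ)..1, (t : ℂ) ^ m * iteratedDeriv (m + 1) f (w + (t : ℂ) * (x - w))‖
      ≤ |∫ t in (0:ℝ)..1, t ^ m * S| := by
    refine (intervalIntegral.norm_integral_le_of_norm_le zero_le_one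
      (Filter.Eventually.of_forall fun t ht => hbound t (by rwa [uIoc_of_le zero_le_one])) hintg).trans (le_abs_self _)
  have h2 : (∫ t in (0:ℝ)..1, t ^ m * S) = S / (m + 1) := by
    rw [intervalIntegral.integral_mul_const, integral_pow]
    push_cast
    ring
  rw [h2, abs_of_nonneg (by positivity)] at h1
  exact h1

private lemma core {V : Set ℂ} (hVo : IsOpen V) (hVc : Convex ℝ V) {ℓ : ℝ}
    (hℓ : ∀ x ∈ V, ∀ y ∈ V, dist x y ≤ ℓ) :
    ∀ (L : List ℂ) (f : ℂ → ℂ) (M : ℝ), (∀ w ∈ L, w ∈ V) →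
      DifferentiableOn ℂ f V →
      (∀ p, ∀ j < L.count p, iteratedDeriv j f p = 0) →
      (∀ y ∈ V, ‖iteratedDeriv L.length f y‖ ≤ M) →
      ∀ m ≤ L.length, ∀ x ∈ V, ‖iteratedDeriv m f x‖
        ≤ M * ℓ ^ (L.length - m) * (L.length.choose m) * m.factorial / (L.length.factorial) := by
  intro L
  induction L with
  | nil =>
    intro f M _ _ _ hM m hm x hx
    have hm0 : m = 0 := Nat.le_zero.1 hm
    subst hm0
    simpa using hM x hx
  | cons w L' ih =>
    intro f M hLV hf hvan hM m hm x hx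
    have hwV : w ∈ V := hLV w List.mem_cons_self
    have hℓ0 : 0 ≤ ℓ := le_trans dist_nonneg (hℓ x hx x hx)
    have hfw : f w = 0 := by
      have h := hvan w 0 (by simp [List.count_cons_self])
      simpa using h
    set g := dslope f w with hg_def
    have hg : DifferentiableOn ℂ g V := dslope_diffOn hVo hf w
    have hvan' : ∀ p, ∀ j < L'.count p, iteratedDeriv j g p = 0 := by
      intro p j hj
      have hpL : p ∈ L' := by
        rw [← List.count_pos_iff]
        omega
      have hpV : p ∈ V := hLV p (List.mem_cons_of_mem w hpL)
      rcases eq_or_ne p w with rfl | hne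
      · exact dslope_vanish_same hVo hf hfw hpV (L'.count p)
          (fun j' hj' => hvan p j' (by rw [List.count_cons_self]; omega)) j hj
      · exact dslope_vanish_ne hVo hf hfw hpV hne (L'.count p)
          (fun j' hj' => hvan p j' (by rw [List.count_cons_of_ne hne.symm]; omega)) j hj
    have hM' : ∀ y ∈ V, ‖iteratedDeriv L'.length g y‖ ≤ M / (L'.length + 1) := by
      intro y hy
      exact dslope_bound hVo hVc hf hwV hfw L'.length
        (fun z hz => by simpa using hM z hz) hy
    have IH := ih g (M / (L'.length + 1))
      (fun v hv => hLV v (List.mem_cons_of_mem w hv)) hg hvan' hM'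
    -- notation
    set q := L'.length with hq
    have hlen : (w :: L').length = q + 1 := by simp [hq]
    rw [hlen] at hm ⊢
    rcases eq_or_lt_of_le hm with rfl | hmlt
    · -- m = q + 1 : directly the hypothesis
      have := hM x hx
      rw [hlen] at this
      have hfac : ((q + 1).factorial : ℝ) ≠ 0 := Nat.cast_ne_zero.2 (Nat.factorial_ne_zero _)
      simp only [Nat.sub_self, pow_zero, Nat.choose_self, Nat.cast_one]
      calc ‖iteratedDeriv (q + 1) f x‖ ≤ M := this
        _ = M * 1 * 1 * (q + 1).factorial / (q + 1).factorial := by field_simp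
    · -- m ≤ q
      have hmq : m ≤ q := by omega
      have key := dslope_itD_identity hVo hf hfw m hx
      have hxw : ‖x - w‖ ≤ ℓ := by rw [← dist_eq_norm]; exact hℓ x hx w hwV
      have h1 := IH m hmq x hx
      have hqfac : ((q.factorial : ℝ)) ≠ 0 := Nat.cast_ne_zero.2 (Nat.factorial_ne_zero _)
      have hq1 : ((q : ℝ) + 1) ≠ 0 := by positivity
      rw [key]
      calc ‖(x - w) * iteratedDeriv m g x + (m : ℂ) * iteratedDeriv (m - 1) g x‖
          ≤ ‖(x - w) * iteratedDeriv m g x‖ + ‖(m : ℂ) * iteratedDeriv (m - 1) g x‖ :=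
            norm_add_le _ _
        _ = ‖x - w‖ * ‖iteratedDeriv m g x‖ + (m : ℝ) * ‖iteratedDeriv (m - 1) g x‖ := by
            rw [norm_mul, norm_mul]
            simp
        _ ≤ ℓ * (M / (q + 1) * ℓ ^ (q - m) * (q.choose m) * m.factorial / q.factorial)
            + (m : ℝ) * ‖iteratedDeriv (m - 1) g x‖ := by
            gcongr ?_ + _
            exact mul_le_mul hxw h1 (norm_nonneg _) hℓ0
        _ ≤ M * ℓ ^ (q + 1 - m) * ((q + 1).choose m) * m.factorial / (q + 1).factorial := by
            cases m with
            | zero =>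
              simp only [Nat.cast_zero, zero_mul, add_zero, Nat.choose_zero_right,
                Nat.factorial_zero, Nat.sub_zero, Nat.cast_one]
              rw [Nat.factorial_succ, pow_succ]
              push_cast
              apply le_of_eq
              field_simp
            | succ r =>
              have hr : r + 1 ≤ q := hmq
              have h2 := IH r (by omega) x hx
              have hstep : (r + 1 : ℝ) * ‖iteratedDeriv (r + 1 - 1) g x‖
                  ≤ (r + 1 : ℝ) * (M / (q + 1) * ℓ ^ (q - r) * (q.choose r) * r.factorial / q.factorial) := by
                rw [show r + 1 - 1 = r from rfl]
                exact mul_le_mul_of_nonneg_left h2 (by positivity)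
              have hexp : ℓ * ℓ ^ (q - (r + 1)) = ℓ ^ (q - r) := by
                rw [show q - r = (q - (r + 1)) + 1 by omega, pow_succ]
                ring
              have hchoose : ((q + 1).choose (r + 1) : ℝ) = (q.choose r : ℝ) + (q.choose (r + 1) : ℝ) := by
                rw [Nat.choose_succ_succ]
                push_cast
                ring
              have hfacr : ((r + 1).factorial : ℝ) = (r + 1) * r.factorial := by
                rw [Nat.factorial_succ]; push_cast; ring
              have hfacq : ((q + 1).factorial : ℝ) = (q + 1) * q.factorial := by
                rw [Nat.factorial_succ]; push_cast; ring
              have hsub : q + 1 - (r + 1) = q - r := by omega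
              calc ℓ * (M / (q + 1) * ℓ ^ (q - (r + 1)) * (q.choose (r + 1)) * (r + 1).factorial / q.factorial)
                    + ((r + 1 : ℕ) : ℝ) * ‖iteratedDeriv (r + 1 - 1) g x‖
                  ≤ ℓ * (M / (q + 1) * ℓ ^ (q - (r + 1)) * (q.choose (r + 1)) * (r + 1).factorial / q.factorial)
                    + (r + 1 : ℝ) * (M / (q + 1) * ℓ ^ (q - r) * (q.choose r) * r.factorial / q.factorial) := by
                    push_cast
                    gcongr _ + ?_
                    exact_mod_cast hstep
                _ = M * ℓ ^ (q + 1 - (r + 1)) * ((q + 1).choose (r + 1)) * (r + 1).factorial / (q + 1).factorial := by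
                    rw [hsub, hchoose, hfacr, hfacq, ← hexp]
                    field_simp
                    ring
        _ = M * ℓ ^ (q + 1 - m) * ((q + 1).choose m) * m.factorial / (q + 1).factorial := rfl

private lemma count_flat {m : ℕ} (z : Fin m → ℂ) (μ : Fin m → ℕ) (hinj : Function.Injective z) :
    ∀ (I : List (Fin m)), I.Nodup → ∀ i ∈ I,
      (I.flatMap (fun i => List.replicate (μ i) (z i))).count (z i) = μ i := by
  intro I
  induction I with
  | nil => intro _ i hi; exact absurd hi List.not_mem_nil
  | cons a I' ih =>
    intro hnd i hi
    have hnd' : I'.Nodup := (List.nodup_cons.1 hnd).2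
    have hna : a ∉ I' := (List.nodup_cons.1 hnd).1
    rw [List.flatMap_cons, List.count_append]
    rcases List.mem_cons.1 hi with rfl | hi'
    · have h1 : (List.replicate (μ i) (z i)).count (z i) = μ i := by
        simp [List.count_replicate]
      have h2 : (I'.flatMap (fun i => List.replicate (μ i) (z i))).count (z i) = 0 := by
        rw [List.count_eq_zero]
        intro hmem
        obtain ⟨b, hb, hzb⟩ := List.mem_flatMap.1 hmem
        have := List.eq_of_mem_replicate hzb
        exact hna ((hinj this) ▸ hb)
      omega
    · have hne : z i ≠ z a := fun h => by
        have : i = a := hinj h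
        subst this; exact hna hi'
      have h1 : (List.replicate (μ a) (z a)).count (z i) = 0 := by
        rw [List.count_eq_zero]
        intro hmem
        exact hne (List.eq_of_mem_replicate hmem)
      rw [h1, ih hnd' i hi', zero_add]

/-- **Kim's theorem.** Let `U ⊆ ℂ` be a bounded convex open set of diameter
`ℓ`, and let `f` be holomorphic on `U`, continuous on its closure, solving
`f^{(n)} + a₁ f^{(n-1)} + ⋯ + aₙ f = 0` with `|a_k| ≤ A_k` on `U` and
`Σ A_k ℓ^k/k! < 1`.  If `f` has at least `n` zeros in `U` counted with
multiplicities, then `f` vanishes identically on `U`. -/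
theorem stmt10 (U : Set ℂ) (hUo : IsOpen U) (hUc : Convex ℝ U)
    (hUb : Bornology.IsBounded U) (ℓ : ℝ) (hdiam : Metric.diam U = ℓ)
    (n : ℕ) (a : ℕ → ℂ → ℂ) (A : ℕ → ℝ)
    (ha : ∀ k ∈ Finset.Icc 1 n, DifferentiableOn ℂ (a k) U)
    (hbd : ∀ k ∈ Finset.Icc 1 n, ∀ z ∈ U, ‖a k z‖ ≤ A k)
    (hsmall : ∑ k ∈ Finset.Icc 1 n, A k * ℓ ^ k / (k.factorial : ℝ) < 1)
    (f : ℂ → ℂ) (hf : DifferentiableOn ℂ f U) (hfc : ContinuousOn f (closure U))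
    (hode : ∀ z ∈ U,
      iteratedDeriv n f z + ∑ k ∈ Finset.Icc 1 n, a k z * iteratedDeriv (n - k) f z = 0)
    (m : ℕ) (z : Fin m → ℂ) (μ : Fin m → ℕ)
    (hinj : Function.Injective z) (hzU : ∀ i, z i ∈ U)
    (hmult : ∀ i, ∀ j < μ i, iteratedDeriv j f (z i) = 0)
    (hsum : n ≤ ∑ i, μ i) :
    ∀ z ∈ U, f z = 0 := by
  -- trivial case n = 0
  rcases Nat.eq_zero_or_pos n with rfl | hn
  · intro y hy
    have h := hode y hy
    simpa using h
  -- now n ≥ 1, hence m ≥ 1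
  have hm : 0 < m := by
    by_contra hm0
    push_neg at hm0
    interval_cases m
    simp at hsum
    omega
  have i0 : Fin m := ⟨0, hm⟩
  -- radii around the zeros
  have hrad : ∀ i : Fin m, ∃ r > 0, ball (z i) r ⊆ U := fun i =>
    Metric.isOpen_iff.1 hUo (z i) (hzU i)
  choose r hr0 hrU using hrad
  obtain ⟨ε, hεdef⟩ : ∃ e : ℝ, e = (Finset.univ.inf' ⟨i0, Finset.mem_univ i0⟩ r) / 3 :=
    ⟨_, rfl⟩
  have hinf_pos : 0 < Finset.univ.inf' ⟨i0, Finset.mem_univ i0⟩ r := by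
    refine (Finset.lt_inf'_iff _).2 ?_
    intro i _
    exact hr0 i
  have hε : 0 < ε := by rw [hεdef]; positivity
  have hεr : ∀ i : Fin m, 3 * ε ≤ r i := by
    intro i
    rw [hεdef]
    have := Finset.inf'_le r (Finset.mem_univ i)
    linarith
  -- the eroded set
  set Aset : Set ℂ := {x | closedBall x ε ⊆ U} with hAdef
  have hAU : Aset ⊆ U := fun x hx => hx (mem_closedBall_self hε.le)
  have hAconv : Convex ℝ Aset := by
    intro x hx y hy s t hs ht hst
    intro u hu
    have hv : dist (u - (s • x + t • y)) 0 ≤ ε := by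
      rw [mem_closedBall, dist_eq_norm] at hu
      simpa [dist_eq_norm] using hu
    set v := u - (s • x + t • y) with hvdef
    have hxu : x + v ∈ closedBall x ε := by
      rw [mem_closedBall, dist_eq_norm]
      simpa [dist_eq_norm] using hv
    have hyu : y + v ∈ closedBall y ε := by
      rw [mem_closedBall, dist_eq_norm]
      simpa [dist_eq_norm] using hv
    have := hUc (hx hxu) (hy hyu) hs ht hst
    have heq : s • (x + v) + t • (y + v) = u := by
      have h1 : s • (x + v) + t • (y + v) = (s • x + t • y) + (s + t) • v := by
        module
      rw [h1, hst, one_smul, hvdef]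
      ring
    rwa [heq] at this
  set V : Set ℂ := interior Aset with hVdef
  have hVo : IsOpen V := isOpen_interior
  have hVc : Convex ℝ V := hAconv.interior
  have hVU : V ⊆ U := interior_subset.trans hAU
  have hzV : ∀ i, z i ∈ V := by
    intro i
    apply mem_interior.2 ⟨ball (z i) ε, ?_, isOpen_ball, mem_ball_self hε⟩
    intro x hx
    intro u hu
    apply hrU i
    rw [mem_ball]
    rw [mem_ball] at hx
    rw [mem_closedBall] at hu
    have h3 := hεr i
    calc dist u (z i) ≤ dist u x + dist x (z i) := dist_triangle _ _ _
      _ < ε + ε := by linarith [hu, hx]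
      _ ≤ r i := by linarith
  have hclV : closure V ⊆ U := by
    intro x hx
    have hx' : x ∈ closure Aset := closure_mono interior_subset hx
    obtain ⟨b, hb, hdist⟩ := Metric.mem_closure_iff.1 hx' ε hε
    exact hb (by rw [mem_closedBall]; exact hdist.le)
  have hℓV : ∀ x ∈ V, ∀ y ∈ V, dist x y ≤ ℓ := by
    intro x hx y hy
    rw [← hdiam]
    exact Metric.dist_le_diam_of_mem hUb (hVU hx) (hVU hy)
  have hℓ0 : 0 ≤ ℓ := hdiam ▸ Metric.diam_nonneg
  -- the list of zeros with multiplicities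
  set L0 : List ℂ := (List.finRange m).flatMap (fun i => List.replicate (μ i) (z i)) with hL0def
  have hlen0 : L0.length = ∑ i, μ i := by
    rw [hL0def, List.length_flatMap]
    rw [Fin.sum_univ_def]
    congr 1
    simp [Function.comp]
  set L : List ℂ := L0.take n with hLdef
  have hlenL : L.length = n := by
    rw [hLdef, List.length_take, hlen0]
    omega
  have hmemL0 : ∀ p ∈ L0, ∃ i, p = z i := by
    intro p hp
    obtain ⟨i, _, hrep⟩ := List.mem_flatMap.1 hp
    exact ⟨i, List.eq_of_mem_replicate hrep⟩
  have hmemL : ∀ p ∈ L, p ∈ V := by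
    intro p hp
    obtain ⟨i, rfl⟩ := hmemL0 p ((List.take_sublist n L0).subset hp)
    exact hzV i
  have hcountL : ∀ p, ∀ j < L.count p, iteratedDeriv j f p = 0 := by
    intro p j hj
    have hpos : 0 < L.count p := by omega
    have hpL : p ∈ L := List.count_pos_iff.1 hpos
    obtain ⟨i, rfl⟩ := hmemL0 p ((List.take_sublist n L0).subset hpL)
    have hle : L.count (z i) ≤ L0.count (z i) :=
      (List.take_sublist n L0).count_le (z i)
    have hc0 : L0.count (z i) = μ i :=
      count_flat z μ hinj (List.finRange m) (List.nodup_finRange m) i (List.mem_finRange i)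
    exact hmult i j (by omega)
  -- compactness and max of the n-th derivative on the closure of V
  have hVb : Bornology.IsBounded V := hUb.subset hVU
  have hKc : IsCompact (closure V) := hVb.isCompact_closure
  have hKne : (closure V).Nonempty := ⟨z i0, subset_closure (hzV i0)⟩
  have hcontn : ContinuousOn (fun y => ‖iteratedDeriv n f y‖) (closure V) :=
    ((itD_diffOn hUo hf n).continuousOn.mono hclV).norm
  obtain ⟨xs, hxs, hmax⟩ := hKc.exists_isMaxOn hKne hcontn
  set M : ℝ := ‖iteratedDeriv n f xs‖ with hMdef
  have hMb : ∀ y ∈ V, ‖iteratedDeriv n f y‖ ≤ M := fun y hy => hmax (subset_closure hy)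
  have hxsU : xs ∈ U := hclV hxs
  -- the core bounds
  have hcore := core hVo hVc hℓV L f M hmemL (hf.mono hVU) hcountL (by rw [hlenL]; exact hMb)
  rw [hlenL] at hcore
  have hbV : ∀ k, 1 ≤ k → k ≤ n → ∀ y ∈ V,
      ‖iteratedDeriv (n - k) f y‖ ≤ M * ℓ ^ k / k.factorial := by
    intro k hk1 hkn y hy
    have h := hcore (n - k) (by omega) y hy
    have hsub : n - (n - k) = k := by omega
    rw [hsub, Nat.choose_symm hkn] at h
    refine h.trans (le_of_eq ?_)
    have hnat : n.choose k * (n - k).factorial * k.factorial = n.factorial := by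
      rw [mul_right_comm]
      exact Nat.choose_mul_factorial_mul_factorial hkn
    have hnatR : ((n.choose k : ℝ)) * ((n - k).factorial : ℝ) * (k.factorial : ℝ)
        = (n.factorial : ℝ) := by exact_mod_cast hnat
    have hkf : ((k.factorial : ℝ)) ≠ 0 := Nat.cast_ne_zero.2 (Nat.factorial_ne_zero _)
    have hnf : ((n.factorial : ℝ)) ≠ 0 := Nat.cast_ne_zero.2 (Nat.factorial_ne_zero _)
    field_simp
    linear_combination (M * ℓ ^ k) * hnatR
  have hbxs : ∀ k, 1 ≤ k → k ≤ n →
      ‖iteratedDeriv (n - k) f xs‖ ≤ M * ℓ ^ k / k.factorial := by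
    intro k hk1 hkn
    have hcont : ContinuousAt (iteratedDeriv (n - k) f) xs :=
      (((itD_diffOn hUo hf (n - k)) xs hxsU).differentiableAt (hUo.mem_nhds hxsU)).continuousAt
    have hne : (𝓝[V] xs).NeBot := mem_closure_iff_nhdsWithin_neBot.1 hxs
    have ht : Filter.Tendsto (fun y => ‖iteratedDeriv (n - k) f y‖) (𝓝[V] xs)
        (𝓝 ‖iteratedDeriv (n - k) f xs‖) := (hcont.norm.tendsto).mono_left nhdsWithin_le_nhds
    exact le_of_tendsto ht (eventually_nhdsWithin_of_forall (hbV k hk1 hkn))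
  -- using the differential equation at the maximum point
  have hode' := hode xs hxsU
  have h1 : iteratedDeriv n f xs
      = -∑ k ∈ Finset.Icc 1 n, a k xs * iteratedDeriv (n - k) f xs :=
    eq_neg_of_add_eq_zero_left hode'
  have hMle : M ≤ M * ∑ k ∈ Finset.Icc 1 n, A k * ℓ ^ k / k.factorial := by
    calc M = ‖iteratedDeriv n f xs‖ := rfl
      _ = ‖∑ k ∈ Finset.Icc 1 n, a k xs * iteratedDeriv (n - k) f xs‖ := by rw [h1, norm_neg]
      _ ≤ ∑ k ∈ Finset.Icc 1 n, ‖a k xs * iteratedDeriv (n - k) f xs‖ := norm_sum_le _ _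
      _ ≤ ∑ k ∈ Finset.Icc 1 n, A k * (M * ℓ ^ k / k.factorial) := by
          apply Finset.sum_le_sum
          intro k hk
          obtain ⟨hk1, hkn⟩ := Finset.mem_Icc.1 hk
          rw [norm_mul]
          have hA : ‖a k xs‖ ≤ A k := by
            exact hbd k hk xs hxsU
          exact mul_le_mul hA (hbxs k hk1 hkn) (norm_nonneg _) (le_trans (norm_nonneg _) hA)
      _ = M * ∑ k ∈ Finset.Icc 1 n, A k * ℓ ^ k / k.factorial := by
          rw [Finset.mul_sum]
          apply Finset.sum_congr rfl
          intro k _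
          ring
  have hM0 : M = 0 := by
    refine le_antisymm ?_ (norm_nonneg _)
    by_contra hpos
    push_neg at hpos
    have := mul_lt_mul_of_pos_left hsmall hpos
    rw [mul_one] at this
    linarith
  have hfV : ∀ y ∈ V, f y = 0 := by
    intro y hy
    have h := hcore 0 (Nat.zero_le n) y hy
    rw [hM0] at h
    simp only [zero_mul, zero_div] at h
    have := norm_le_zero_iff.1 h
    simpa [iteratedDeriv_zero] using this
  intro y hy
  have hAna : AnalyticOnNhd ℂ f U := hf.analyticOnNhd hUo
  have hev : f =ᶠ[𝓝 (z i0)] 0 := by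
    filter_upwards [hVo.mem_nhds (hzV i0)] with y' hy' using hfV y' hy'
  exact hAna.eqOn_zero_of_preconnected_of_eventuallyEq_zero hUc.isPreconnected (hzU i0) hev hy
end

section
/- (Variation of argument for complex-valued linear ODEs) Let ℓ > 0 and let a_1,…,a_n : [0,ℓ] → ℂ be continuous with |a_k(t)| ≤ A_k for all t, where Σ_{k=1}^n A_k · ℓ^k / k! < 1/2. Let f : [0,ℓ] → ℂ be n times continuously differentiable, satisfy f^{(n)}(t) + a_1(t) f^{(n−1)}(t) + ⋯ + a_n(t) f(t) = 0 on [0,ℓ], and suppose f(t) ≠ 0 for all t ∈ [0,ℓ]. Let θ : [0,ℓ] → ℝ be any continuous branch of the argument of f, i.e. a continuous function with f(t) = |f(t)| · exp(i θ(t)) for all t. Then |θ(ℓ) − θ(0)| < (n+1)π. -/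
open Set

lemma hasDerivWithinAt_re_comp {u : ℝ → ℂ} {u' : ℂ} {s : Set ℝ} {t : ℝ}
    (h : HasDerivWithinAt u u' s t) :
    HasDerivWithinAt (fun x => (u x).re) u'.re s t := by
  exact (Complex.reCLM.hasFDerivAt.comp_hasDerivWithinAt t h)

lemma rolle_finset {ℓ : ℝ} {G0 G1 : ℝ → ℝ}
    (hd : ∀ t ∈ Set.Icc (0:ℝ) ℓ, HasDerivWithinAt G0 (G1 t) (Set.Icc 0 ℓ) t)
    (m : ℕ) (Z : Finset ℝ) (hZ : ↑Z ⊆ Set.Icc (0:ℝ) ℓ) (hcard : m + 1 ≤ Z.card)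
    (hzero : ∀ z ∈ Z, G0 z = 0) :
    ∃ Z' : Finset ℝ, ↑Z' ⊆ Set.Icc (0:ℝ) ℓ ∧ m ≤ Z'.card ∧ ∀ z ∈ Z', G1 z = 0 := by
  obtain ⟨W, hWZ, hWcard⟩ := Z.exists_subset_card_eq hcard
  set x : Fin (m+1) → ℝ := fun i => ((W.orderIsoOfFin hWcard i : W) : ℝ) with hxdef
  have hxmono : StrictMono x := fun i j hij =>
    Subtype.coe_lt_coe.mpr ((W.orderIsoOfFin hWcard).strictMono hij)
  have hxI : ∀ i, x i ∈ Set.Icc (0:ℝ) ℓ := fun i => hZ (hWZ (W.orderIsoOfFin hWcard i).2)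
  have hxZ : ∀ i, x i ∈ Z := fun i => hWZ (W.orderIsoOfFin hWcard i).2
  have key : ∀ i : Fin m, ∃ cc ∈ Set.Ioo (x i.castSucc) (x i.succ), G1 cc = 0 := by
    intro i
    have hab : x i.castSucc < x i.succ := hxmono Fin.castSucc_lt_succ
    have ha := hxI i.castSucc
    have hb := hxI i.succ
    apply exists_hasDerivAt_eq_zero hab
    · intro t ht
      exact ((hd t (Set.Icc_subset_Icc ha.1 hb.2 ht)).continuousWithinAt).mono
        (Set.Icc_subset_Icc ha.1 hb.2)
    · rw [hzero _ (hxZ i.castSucc), hzero _ (hxZ i.succ)]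
    · intro y hy
      have hyI : y ∈ Set.Icc (0:ℝ) ℓ := ⟨le_trans ha.1 hy.1.le, le_trans hy.2.le hb.2⟩
      exact (hd y hyI).hasDerivAt (Icc_mem_nhds (lt_of_le_of_lt ha.1 hy.1)
        (lt_of_lt_of_le hy.2 hb.2))
  choose y hy hy0 using key
  have hymono : StrictMono y := by
    intro i j hij
    have h1 : y i < x i.succ := (hy i).2
    have h2 : x j.castSucc < y j := (hy j).1
    have h3 : x i.succ ≤ x j.castSucc := hxmono.monotone (by
      have hij' : (i : ℕ) < (j : ℕ) := hij
      rw [Fin.le_def, Fin.val_succ, Fin.coe_castSucc]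
      omega)
    linarith
  refine ⟨Finset.image y Finset.univ, ?_, ?_, ?_⟩
  · intro z hz
    simp only [Finset.coe_image, Set.mem_image] at hz
    obtain ⟨i, _, rfl⟩ := hz
    have h1 := (hy i).1
    have h2 := (hy i).2
    exact ⟨le_trans (hxI i.castSucc).1 h1.le, le_trans h2.le (hxI i.succ).2⟩
  · rw [Finset.card_image_of_injective _ hymono.injective, Finset.card_univ, Fintype.card_fin]
  · intro z hz
    simp only [Finset.mem_image] at hz
    obtain ⟨i, _, rfl⟩ := hz
    exact hy0 i

lemma cascade {ℓ : ℝ} : ∀ (j : ℕ) (G : ℕ → ℝ → ℝ),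
    (∀ i < j, ∀ t ∈ Set.Icc (0:ℝ) ℓ, HasDerivWithinAt (G i) (G (i+1) t) (Set.Icc 0 ℓ) t) →
    ∀ (c : ℕ) (Z : Finset ℝ), ↑Z ⊆ Set.Icc (0:ℝ) ℓ → c + j ≤ Z.card →
    (∀ z ∈ Z, G 0 z = 0) →
    ∃ Z' : Finset ℝ, ↑Z' ⊆ Set.Icc (0:ℝ) ℓ ∧ c ≤ Z'.card ∧ ∀ z ∈ Z', G j z = 0 := by
  intro j
  induction j with
  | zero => exact fun G _ c Z hZ hc hz => ⟨Z, hZ, by simpa using hc, hz⟩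
  | succ j ih =>
    intro G hd c Z hZ hc hz
    obtain ⟨Z1, hZ1, hc1, hz1⟩ := rolle_finset (hd 0 (by omega)) (c + j) Z hZ (by omega) hz
    exact ih (fun i => G (i+1)) (fun i hi => hd (i+1) (by omega)) c Z1 hZ1 (by omega) hz1

lemma iterDeriv_prod {k : ℕ} (x : Fin k → ℝ) :
    Polynomial.derivative^[k] (∏ i, (Polynomial.X - Polynomial.C (x i)))
      = Polynomial.C ((k.factorial : ℝ)) := by
  set p := ∏ i, (Polynomial.X - Polynomial.C (x i)) with hp
  have hdeg : p.natDegree = k := by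
    rw [hp, Polynomial.natDegree_prod _ _ (fun i _ => Polynomial.X_sub_C_ne_zero _)]
    simp [Polynomial.natDegree_X_sub_C]
  have hm : p.Monic := Polynomial.monic_prod_of_monic _ _ (fun i _ => Polynomial.monic_X_sub_C _)
  have h1 : (Polynomial.derivative^[k] p).natDegree ≤ 0 :=
    le_trans (Polynomial.natDegree_iterate_derivative _ _) (by omega)
  have h2 : (Polynomial.derivative^[k] p).coeff 0 = (k.factorial : ℝ) := by
    rw [Polynomial.coeff_iterate_derivative]
    simp only [zero_add, Nat.descFactorial_self, smul_eq_mul]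
    rw [← hdeg, hm.coeff_natDegree]
    simp
  rw [Polynomial.eq_C_of_natDegree_le_zero h1, h2]

lemma poly_bound {ℓ : ℝ} (hℓ : 0 ≤ ℓ) (k : ℕ) (G : ℕ → ℝ → ℝ)
    (hd : ∀ j < k, ∀ t ∈ Set.Icc (0:ℝ) ℓ, HasDerivWithinAt (G j) (G (j+1) t) (Set.Icc 0 ℓ) t)
    (Z : Finset ℝ) (hZ : ↑Z ⊆ Set.Icc (0:ℝ) ℓ) (hcard : k ≤ Z.card)
    (hzero : ∀ z ∈ Z, G 0 z = 0)
    (M : ℝ) (hM : ∀ t ∈ Set.Icc (0:ℝ) ℓ, |G k t| ≤ M) :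
    ∀ t ∈ Set.Icc (0:ℝ) ℓ, |G 0 t| ≤ M * ℓ^k / k.factorial := by
  have hM0 : 0 ≤ M := le_trans (abs_nonneg _) (hM 0 ⟨le_refl _, hℓ⟩)
  have hRHS : (0:ℝ) ≤ M * ℓ^k / k.factorial := by positivity
  intro t ht
  by_cases h0 : G 0 t = 0
  · rw [h0, abs_zero]; exact hRHS
  have htZ : t ∉ Z := fun h => h0 (hzero t h)
  obtain ⟨W, hWZ, hWcard⟩ := Z.exists_subset_card_eq hcard
  set x : Fin k → ℝ := fun i => ((W.orderIsoOfFin hWcard i : W) : ℝ) with hxdef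
  have hxW : ∀ i, x i ∈ W := fun i => (W.orderIsoOfFin hWcard i).2
  have hxI : ∀ i, x i ∈ Set.Icc (0:ℝ) ℓ := fun i => hZ (hWZ (hxW i))
  have hsurj : ∀ z ∈ W, ∃ i, x i = z := fun z hz =>
    ⟨(W.orderIsoOfFin hWcard).symm ⟨z, hz⟩, by
      simp only [hxdef]
      exact congrArg Subtype.val ((W.orderIsoOfFin hWcard).apply_symm_apply ⟨z, hz⟩)⟩
  set p : Polynomial ℝ := ∏ i, (Polynomial.X - Polynomial.C (x i)) with hp
  have hpt : p.eval t ≠ 0 := by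
    rw [hp]
    simp only [Polynomial.eval_prod, Polynomial.eval_sub, Polynomial.eval_X, Polynomial.eval_C]
    apply Finset.prod_ne_zero_iff.mpr
    intro i _
    have hne : x i ≠ t := fun h => htZ (h ▸ hWZ (hxW i))
    exact sub_ne_zero.mpr (Ne.symm hne)
  set cc : ℝ := G 0 t / p.eval t with hcc
  set Φ : ℕ → ℝ → ℝ := fun j s => G j s - cc * (Polynomial.derivative^[j] p).eval s with hΦ
  have hΦd : ∀ j < k, ∀ s ∈ Set.Icc (0:ℝ) ℓ,
      HasDerivWithinAt (Φ j) (Φ (j+1) s) (Set.Icc 0 ℓ) s := by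
    intro j hj s hs
    have h2 : HasDerivWithinAt (fun u => (Polynomial.derivative^[j] p).eval u)
        ((Polynomial.derivative^[j+1] p).eval s) (Set.Icc 0 ℓ) s := by
      have h3 := (Polynomial.hasDerivAt (Polynomial.derivative^[j] p) s).hasDerivWithinAt
        (s := Set.Icc (0:ℝ) ℓ)
      rw [Function.iterate_succ_apply']
      exact h3
    exact (hd j hj s hs).sub (h2.const_mul cc)
  have hZ0card : (insert t W).card = k + 1 := by
    rw [Finset.card_insert_of_notMem (fun h => htZ (hWZ h)), hWcard]
  have hZ0sub : ↑(insert t W) ⊆ Set.Icc (0:ℝ) ℓ := by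
    intro z hz
    rcases Finset.mem_insert.mp hz with h | h
    · exact h ▸ ht
    · exact hZ (hWZ h)
  have hZ0zero : ∀ z ∈ insert t W, Φ 0 z = 0 := by
    intro z hz
    rcases Finset.mem_insert.mp hz with h | h
    · subst h
      simp only [hΦ, Function.iterate_zero, id_eq, hcc]
      field_simp
      ring
    · have h1 : G 0 z = 0 := hzero z (hWZ h)
      have h2 : p.eval z = 0 := by
        obtain ⟨i, hi⟩ := hsurj z h
        rw [hp]
        simp only [Polynomial.eval_prod, Polynomial.eval_sub, Polynomial.eval_X, Polynomial.eval_C]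
        exact Finset.prod_eq_zero (Finset.mem_univ i) (by rw [hi, sub_self])
      simp [hΦ, h1, h2]
  obtain ⟨Z2, hZ2I, hZ2c, hZ2z⟩ := cascade k Φ hΦd 1 (insert t W) hZ0sub (by omega) hZ0zero
  obtain ⟨ξ, hξmem⟩ := Finset.card_pos.mp (by omega : 0 < Z2.card)
  have hξI : ξ ∈ Set.Icc (0:ℝ) ℓ := hZ2I hξmem
  have hξ : Φ k ξ = 0 := hZ2z ξ hξmem
  have hPk := iterDeriv_prod x
  have hGk : G k ξ = cc * k.factorial := by
    have h4 := hξ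
    simp only [hΦ] at h4
    rw [hp, hPk, Polynomial.eval_C] at h4
    linarith
  have hccb : |cc| * (k.factorial : ℝ) ≤ M := by
    have h5 := hM ξ hξI
    rw [hGk, abs_mul, abs_of_nonneg (by positivity : (0:ℝ) ≤ (k.factorial : ℝ))] at h5
    exact h5
  have hprod : |p.eval t| ≤ ℓ^k := by
    rw [hp]
    simp only [Polynomial.eval_prod, Polynomial.eval_sub, Polynomial.eval_X, Polynomial.eval_C]
    rw [Finset.abs_prod]
    calc ∏ i, |t - x i| ≤ ∏ _i : Fin k, ℓ := by
          apply Finset.prod_le_prod (fun i _ => abs_nonneg _)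
          intro i _
          have h1 := hxI i
          rw [abs_sub_le_iff]
          constructor
          · linarith [ht.2, h1.1]
          · linarith [ht.1, h1.2]
      _ = ℓ^k := by simp
  have hG0 : G 0 t = cc * p.eval t := by rw [hcc]; field_simp
  have hk : (0:ℝ) < k.factorial := by positivity
  rw [hG0, abs_mul]
  calc |cc| * |p.eval t| ≤ (M / k.factorial) * ℓ^k := by
        apply mul_le_mul _ hprod (abs_nonneg _) (by positivity)
        rw [le_div_iff₀ hk]
        exact hccb
    _ = M * ℓ^k / k.factorial := by ring



/-- **Variation of argument for complex-valued linear ODEs.** If the complex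
coefficients of `f^{(n)} + a₁ f^{(n-1)} + ⋯ + aₙ f = 0` on `[0,ℓ]` satisfy
`|a_k| ≤ A_k` with `Σ A_k ℓ^k / k! < 1/2`, and a solution `f` is nonvanishing
on `[0,ℓ]`, then any continuous branch `θ` of the argument of `f` satisfies
`|θ(ℓ) − θ(0)| < (n+1)π`. -/
theorem stmt11 (ℓ : ℝ) (hℓ : 0 < ℓ) (n : ℕ) (a : ℕ → ℝ → ℂ) (A : ℕ → ℝ)
    (hacont : ∀ k ∈ Finset.Icc 1 n, ContinuousOn (a k) (Set.Icc 0 ℓ))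
    (hbd : ∀ k ∈ Finset.Icc 1 n, ∀ t ∈ Set.Icc 0 ℓ, ‖a k t‖ ≤ A k)
    (hsmall : ∑ k ∈ Finset.Icc 1 n, A k * ℓ ^ k / (k.factorial : ℝ) < 1 / 2)
    (f : ℝ → ℂ) (hf : ContDiffOn ℝ n f (Set.Icc 0 ℓ))
    (hode : ∀ t ∈ Set.Icc 0 ℓ,
      iteratedDerivWithin n f (Set.Icc 0 ℓ) t
        + ∑ k ∈ Finset.Icc 1 n, a k t * iteratedDerivWithin (n - k) f (Set.Icc 0 ℓ) t = 0)
    (hfne : ∀ t ∈ Set.Icc 0 ℓ, f t ≠ 0)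
    (θ : ℝ → ℝ) (hθc : ContinuousOn θ (Set.Icc 0 ℓ))
    (hθ : ∀ t ∈ Set.Icc 0 ℓ,
      f t = ((‖f t‖ : ℝ) : ℂ) * Complex.exp (θ t * Complex.I)) :
    |θ ℓ - θ 0| < (n + 1) * Real.pi := by
  have h0I : (0:ℝ) ∈ Set.Icc (0:ℝ) ℓ := ⟨le_refl _, hℓ.le⟩
  rcases Nat.eq_zero_or_pos n with hn0 | hn1
  · exfalso
    subst hn0
    have h := hode 0 h0I
    simp only [iteratedDerivWithin_zero, Finset.Icc_self, Finset.Icc_eq_empty_of_lt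
      (by norm_num : (1:ℕ) > 0)] at h
    simp at h
    exact hfne 0 h0I h
  by_contra hcon
  push_neg at hcon
  have hπ := Real.pi_pos
  have hUD : UniqueDiffOn ℝ (Set.Icc (0:ℝ) ℓ) := uniqueDiffOn_Icc hℓ
  set F : ℕ → ℝ → ℂ := fun k => iteratedDerivWithin k f (Set.Icc 0 ℓ) with hF
  have hFd : ∀ k < n, ∀ t ∈ Set.Icc (0:ℝ) ℓ,
      HasDerivWithinAt (F k) (F (k+1) t) (Set.Icc 0 ℓ) t := by
    intro k hk t ht
    have hdiff : DifferentiableWithinAt ℝ (F k) (Set.Icc 0 ℓ) t :=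
      (hf.differentiableOn_iteratedDerivWithin (by exact_mod_cast hk) hUD) t ht
    have h := hdiff.hasDerivWithinAt
    rwa [hF, ← iteratedDerivWithin_succ] at h
  have hFc : ContinuousOn (F n) (Set.Icc 0 ℓ) :=
    hf.continuousOn_iteratedDerivWithin le_rfl hUD
  obtain ⟨ts, htsI, htsmax⟩ := isCompact_Icc.exists_isMaxOn (Set.nonempty_Icc.mpr hℓ.le)
    (continuous_norm.comp_continuousOn hFc)
  have hts : ∀ t ∈ Set.Icc (0:ℝ) ℓ, ‖F n t‖ ≤ ‖F n ts‖ :=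
    fun t ht => htsmax ht
  set M := ‖F n ts‖ with hM
  have hM0 : 0 ≤ M := norm_nonneg _
  set g : ℝ → ℕ → ℝ → ℝ :=
    fun α j t => (Complex.exp (-(α:ℂ) * Complex.I) * F j t).re with hg
  have hgd : ∀ (α : ℝ), ∀ j < n, ∀ t ∈ Set.Icc (0:ℝ) ℓ,
      HasDerivWithinAt (g α j) (g α (j+1) t) (Set.Icc 0 ℓ) t := fun α j hj t ht =>
    hasDerivWithinAt_re_comp (HasDerivWithinAt.const_mul _ (hFd j hj t ht))
  have hgM : ∀ (α : ℝ), ∀ t ∈ Set.Icc (0:ℝ) ℓ, |g α n t| ≤ M := by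
    intro α t ht
    calc |g α n t| ≤ ‖Complex.exp (-(α:ℂ) * Complex.I) * F n t‖ :=
          Complex.abs_re_le_norm _
      _ = ‖F n t‖ := by
          rw [norm_mul, Complex.norm_exp]
          simp
      _ ≤ M := hts t ht
  -- zeros of the projections
  have hzeros : ∀ α : ℝ, ∃ Z : Finset ℝ, ↑Z ⊆ Set.Icc (0:ℝ) ℓ ∧ n + 1 ≤ Z.card ∧
      ∀ z ∈ Z, g α 0 z = 0 := by
    intro α
    set c := min (θ 0) (θ ℓ) with hc
    set d := max (θ 0) (θ ℓ) with hd
    have hcd : ((n:ℝ)+1) * Real.pi ≤ d - c := by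
      rw [hd, hc, max_sub_min_eq_abs]
      exact hcon
    set j0 : ℤ := ⌈(c - α - Real.pi/2)/Real.pi⌉ with hj0
    have hv : ∀ i : ℕ, i ≤ n →
        c ≤ α + Real.pi/2 + ((j0:ℝ) + i)*Real.pi ∧
        α + Real.pi/2 + ((j0:ℝ) + i)*Real.pi ≤ d := by
      intro i hi
      have h1 : (c - α - Real.pi/2)/Real.pi ≤ (j0:ℝ) := Int.le_ceil _
      have h2 : (j0:ℝ) < (c - α - Real.pi/2)/Real.pi + 1 := by
        have := Int.ceil_lt_add_one ((c - α - Real.pi/2)/Real.pi)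
        exact_mod_cast this
      have h1' : c - α - Real.pi/2 ≤ (j0:ℝ) * Real.pi := by
        rw [div_le_iff₀ hπ] at h1; linarith
      have h2a : ((j0:ℝ) - 1) < (c - α - Real.pi/2)/Real.pi := by linarith
      have h2' : ((j0:ℝ) - 1) * Real.pi < c - α - Real.pi/2 := (lt_div_iff₀ hπ).mp h2a
      have hi' : (i:ℝ) ≤ n := by exact_mod_cast hi
      have hi0 : (0:ℝ) ≤ i := Nat.cast_nonneg i
      constructor
      · nlinarith [mul_nonneg hi0 hπ.le]
      · nlinarith [mul_nonneg (by linarith : (0:ℝ) ≤ (n:ℝ) - i) hπ.le, hcd]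
    have hIVT : ∀ v : ℝ, c ≤ v → v ≤ d → ∃ s ∈ Set.Icc (0:ℝ) ℓ, θ s = v := by
      intro v h1 h2
      have hsub : Set.uIcc (θ 0) (θ ℓ) ⊆ θ '' (Set.uIcc 0 ℓ) :=
        intermediate_value_uIcc (by rwa [Set.uIcc_of_le hℓ.le])
      have hmem : v ∈ Set.uIcc (θ 0) (θ ℓ) := by
        rcases le_total (θ 0) (θ ℓ) with h | h
        · rw [Set.uIcc_of_le h]
          constructor
          · rw [hc, min_eq_left h] at h1; exact h1
          · rw [hd, max_eq_right h] at h2; exact h2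
        · rw [Set.uIcc_of_ge h]
          constructor
          · rw [hc, min_eq_right h] at h1; exact h1
          · rw [hd, max_eq_left h] at h2; exact h2
      obtain ⟨s, hs, hθs⟩ := hsub hmem
      rw [Set.uIcc_of_le hℓ.le] at hs
      exact ⟨s, hs, hθs⟩
    have hex : ∀ i : Fin (n+1), ∃ s ∈ Set.Icc (0:ℝ) ℓ,
        θ s = α + Real.pi/2 + ((j0:ℝ) + (i:ℕ))*Real.pi := by
      intro i
      have hi : (i:ℕ) ≤ n := Nat.lt_succ_iff.mp i.2
      exact hIVT _ (hv i hi).1 (hv i hi).2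
    choose s hsI hsv using hex
    have hsinj : Function.Injective s := by
      intro i j hij
      have h1 : θ (s i) = θ (s j) := by rw [hij]
      rw [hsv i, hsv j] at h1
      have h2 : ((j0:ℝ) + (i:ℕ)) * Real.pi = ((j0:ℝ) + (j:ℕ)) * Real.pi := by linarith
      have h3 : ((i:ℕ):ℝ) = ((j:ℕ):ℝ) := by
        have := mul_right_cancel₀ (ne_of_gt hπ) h2
        linarith
      have h4 : (i:ℕ) = (j:ℕ) := by exact_mod_cast h3
      exact Fin.ext h4
    refine ⟨Finset.image s Finset.univ, ?_, ?_, ?_⟩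
    · intro z hz
      simp only [Finset.coe_image, Set.mem_image] at hz
      obtain ⟨i, _, rfl⟩ := hz
      exact hsI i
    · rw [Finset.card_image_of_injective _ hsinj, Finset.card_univ, Fintype.card_fin]
    · intro z hz
      simp only [Finset.mem_image] at hz
      obtain ⟨i, _, rfl⟩ := hz
      have hF0 : F 0 (s i) = f (s i) := by rw [hF]; simp [iteratedDerivWithin_zero]
      have key : Complex.exp (-(α:ℂ) * Complex.I) * F 0 (s i)
          = ((‖f (s i)‖ : ℝ) : ℂ)
            * Complex.exp (((θ (s i) - α : ℝ) : ℂ) * Complex.I) := by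
        have hfe := hθ (s i) (hsI i)
        have harg : (↑(θ (s i)) * Complex.I + -(α:ℂ) * Complex.I)
            = ((θ (s i) - α : ℝ) : ℂ) * Complex.I := by push_cast; ring
        rw [hF0]
        conv_lhs => rw [hfe]
        rw [mul_comm, mul_assoc, ← Complex.exp_add, harg]
      simp only [hg]
      rw [key, Complex.re_ofReal_mul, Complex.exp_ofReal_mul_I_re]
      have hcos : Real.cos (θ (s i) - α) = 0 := by
        apply Real.cos_eq_zero_iff.mpr
        refine ⟨j0 + (i:ℕ), ?_⟩
        rw [hsv i]
        push_cast
        ring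
      rw [hcos, mul_zero]
  -- the key derivative bounds
  have hbound : ∀ k, 1 ≤ k → k ≤ n → ∀ t ∈ Set.Icc (0:ℝ) ℓ,
      ‖F (n - k) t‖ ≤ M * ℓ^k / k.factorial := by
    intro k hk1 hkn t ht
    set α := (F (n-k) t).arg with hα
    obtain ⟨Z, hZI, hZc, hZz⟩ := hzeros α
    obtain ⟨Z1, hZ1I, hZ1c, hZ1z⟩ := cascade (n - k) (g α)
      (fun i hi => hgd α i (by omega)) (k+1) Z hZI (by omega) hZz
    have hnk : n - k + k = n := Nat.sub_add_cancel hkn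
    have hb := poly_bound hℓ.le k (fun j => g α (n - k + j))
      (fun j hj s hs => hgd α (n - k + j) (by omega) s hs)
      Z1 hZ1I (by omega) (fun z hz => hZ1z z hz) M
      (fun s hs => by
        show |g α (n - k + k) s| ≤ M
        rw [hnk]; exact hgM α s hs) t ht
    have habs : ‖F (n-k) t‖ = g α (n-k) t := by
      have h1 : Complex.exp (-(α:ℂ) * Complex.I) * F (n-k) t
          = ((‖F (n-k) t‖ : ℝ) : ℂ) := by
        conv_lhs => rw [← Complex.norm_mul_exp_arg_mul_I (F (n-k) t)]
        rw [show Complex.exp (-(α:ℂ) * Complex.I)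
            * ((‖F (n-k) t‖ : ℂ) * Complex.exp (((F (n-k) t).arg : ℂ) * Complex.I))
            = (‖F (n-k) t‖ : ℂ)
              * (Complex.exp (-(α:ℂ) * Complex.I)
                * Complex.exp (((F (n-k) t).arg : ℂ) * Complex.I)) from by ring,
          ← Complex.exp_add]
        rw [hα]
        simp
      simp only [hg]
      rw [h1, Complex.ofReal_re]
    rw [habs]
    exact le_trans (le_abs_self _) hb
  -- conclude M = 0
  have hA0 : ∀ k ∈ Finset.Icc 1 n, 0 ≤ A k := fun k hk =>
    le_trans (norm_nonneg _) (hbd k hk 0 h0I)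
  have hFn : F n ts = -∑ k ∈ Finset.Icc 1 n, a k ts * F (n-k) ts :=
    eq_neg_of_add_eq_zero_left (hode ts htsI)
  have hMM : M ≤ (∑ k ∈ Finset.Icc 1 n, A k * ℓ^k / k.factorial) * M := by
    calc M = ‖F n ts‖ := rfl
      _ = ‖∑ k ∈ Finset.Icc 1 n, a k ts * F (n-k) ts‖ := by
          rw [hFn]
          exact norm_neg _
      _ ≤ ∑ k ∈ Finset.Icc 1 n, ‖a k ts * F (n-k) ts‖ :=
          norm_sum_le _ _
      _ ≤ ∑ k ∈ Finset.Icc 1 n, A k * (M * ℓ^k / k.factorial) := by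
          apply Finset.sum_le_sum
          intro k hk
          rw [norm_mul]
          have hk' := Finset.mem_Icc.mp hk
          exact mul_le_mul (hbd k hk ts htsI) (hbound k hk'.1 hk'.2 ts htsI)
            (norm_nonneg _) (hA0 k hk)
      _ = (∑ k ∈ Finset.Icc 1 n, A k * ℓ^k / k.factorial) * M := by
          rw [Finset.sum_mul]
          apply Finset.sum_congr rfl
          intros; ring
  have hMzero : M = 0 := by
    rcases hM0.eq_or_lt with h | h
    · exact h.symm
    · exfalso
      have h2 := mul_lt_mul_of_pos_right hsmall h
      nlinarith
  have hfinal := hbound n hn1 le_rfl 0 h0I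
  rw [hMzero] at hfinal
  have hzero : ‖F (n - n) 0‖ ≤ 0 := by
    calc ‖F (n - n) 0‖ ≤ 0 * ℓ^n / n.factorial := hfinal
      _ = 0 := by ring
  have hf0 : f 0 = 0 := by
    have h1 : F (n - n) 0 = f 0 := by
      rw [Nat.sub_self, hF]
      simp [iteratedDerivWithin_zero]
    rw [h1] at hzero
    exact norm_eq_zero.mp (le_antisymm hzero (norm_nonneg _))
  exact hfne 0 h0I hf0
end

section
/- For every k ∈ ℕ there exists a constant δ_k > 0, depending only on k, with the following property. Let f be holomorphic in the open unit disk 𝔻 and continuous on its closure, normalized so that sup_{z∈𝔻} |f(z)| = 1, and suppose |f^{(k)}(0)| = s > 0. Then f has at most k zeros, counted with multiplicities, in the open disk { z : |z| < δ_k · s }. -/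
open Metric Set Filter
open scoped Topology Nat

/-- iterated derivative in terms of power series coefficients. -/
lemma stmt17_l1 {f : ℂ → ℂ} {p : FormalMultilinearSeries ℂ ℂ ℂ} {a : ℂ}
    (hp : HasFPowerSeriesAt f p a) (j : ℕ) :
    iteratedDeriv j f a = (j ! : ℂ) * p.coeff j := by
  obtain ⟨r, hr⟩ := hp
  have h := hr.factorial_smul (1 : ℂ) j
  rw [iteratedDeriv, ← h, FormalMultilinearSeries.apply_eq_pow_smul_coeff]
  simp [nsmul_eq_mul]

/-- Vanishing of the first `n` derivatives gives a local factorization `(z-a)^n * g`. -/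
lemma stmt17_bridge {f : ℂ → ℂ} {a : ℂ} (n : ℕ) (hf : AnalyticAt ℂ f a)
    (hv : ∀ j < n, iteratedDeriv j f a = 0) :
    ∃ g : ℂ → ℂ, AnalyticAt ℂ g a ∧ ∀ᶠ z in 𝓝[≠] a, f z = (z - a) ^ n * g z := by
  induction n generalizing f with
  | zero => exact ⟨f, hf, by filter_upwards with z; simp⟩
  | succ n ih =>
    obtain ⟨p, hp⟩ := hf
    have hfa : f a = 0 := by
      have := hv 0 (Nat.succ_pos n)
      simpa [iteratedDeriv_zero] using this
    have hps : HasFPowerSeriesAt (dslope f a) p.fslope a :=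
      hp.has_fpower_series_dslope_fslope
    have hglob : ∀ z, f z = (z - a) * dslope f a z := by
      intro z
      have h := sub_smul_dslope f a z
      rw [hfa, sub_zero] at h
      simpa [smul_eq_mul] using h.symm
    have hv' : ∀ j < n, iteratedDeriv j (dslope f a) a = 0 := by
      intro j hj
      rw [stmt17_l1 hps j, FormalMultilinearSeries.coeff_fslope]
      have h2 := stmt17_l1 hp (j + 1)
      rw [hv (j + 1) (by omega)] at h2
      have hfac : ((j + 1)! : ℂ) ≠ 0 := by
        exact_mod_cast Nat.cast_ne_zero.mpr (Nat.factorial_ne_zero (j + 1))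
      have : p.coeff (j + 1) = 0 := by
        have := mul_eq_zero.mp h2.symm
        tauto
      rw [this, mul_zero]
    obtain ⟨g, hg, hev⟩ := ih ⟨p.fslope, hps⟩ hv'
    refine ⟨g, hg, ?_⟩
    filter_upwards [hev] with z hz
    rw [hglob z, hz]
    ring

/-- If `f` is continuous at `a` and locally `f z = (z-a)^(n+1) * g z` with `g` analytic,
then `f a = 0`. -/
lemma stmt17_zero_at {f g : ℂ → ℂ} {a : ℂ} {n : ℕ} (hfc : ContinuousAt f a)
    (hg : AnalyticAt ℂ g a) (hev : ∀ᶠ z in 𝓝[≠] a, f z = (z - a) ^ (n + 1) * g z) :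
    f a = 0 := by
  have h1 : Tendsto f (𝓝[≠] a) (𝓝 (f a)) :=
    hfc.continuousWithinAt.tendsto
  have h2 : Tendsto (fun z => (z - a) ^ (n + 1) * g z) (𝓝 a) (𝓝 ((a - a) ^ (n + 1) * g a)) := by
    exact (((continuous_id.sub continuous_const).pow (n + 1)).continuousAt).mul
      hg.continuousAt
  have h2' : Tendsto (fun z => (z - a) ^ (n + 1) * g z) (𝓝[≠] a) (𝓝 0) := by
    have : (a - a) ^ (n + 1) * g a = 0 := by simp
    exact this ▸ h2.mono_left nhdsWithin_le_nhds
  exact tendsto_nhds_unique (h1.congr' (by filter_upwards [hev] with z hz; rw [hz])) h2'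

/-- Global factorization over a list of zeros (with multiplicity given by count). -/
lemma stmt17_factor (L : List ℂ) :
    ∀ f : ℂ → ℂ, DifferentiableOn ℂ f (ball (0:ℂ) 1) →
    (∀ a ∈ L, a ∈ ball (0:ℂ) 1) →
    (∀ a ∈ L, ∃ g : ℂ → ℂ, AnalyticAt ℂ g a ∧
       ∀ᶠ z in 𝓝[≠] a, f z = (z - a) ^ (L.count a) * g z) →
    ∃ g : ℂ → ℂ, DifferentiableOn ℂ g (ball (0:ℂ) 1) ∧
      ∀ z, f z = (L.map (fun a => z - a)).prod * g z := by
  induction L with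
  | nil =>
    intro f hf _ _
    exact ⟨f, hf, fun z => by simp⟩
  | cons a L ih =>
    intro f hf hmem hP
    have ha1 : a ∈ ball (0:ℂ) 1 := hmem a (List.mem_cons_self)
    have hfan : AnalyticAt ℂ f a := hf.analyticAt (isOpen_ball.mem_nhds ha1)
    obtain ⟨g0, hg0, hev0⟩ := hP a (List.mem_cons_self)
    have hcnt : (a :: L).count a = L.count a + 1 := by
      simp [List.count_cons_self]
    rw [hcnt] at hev0
    have hfa : f a = 0 :=
      stmt17_zero_at hfan.continuousAt hg0 hev0
    set f1 := dslope f a with hf1def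
    have hdf1 : DifferentiableOn ℂ f1 (ball (0:ℂ) 1) :=
      (Complex.differentiableOn_dslope (isOpen_ball.mem_nhds ha1)).mpr hf
    have hglob : ∀ z, f z = (z - a) * f1 z := by
      intro z
      have h := sub_smul_dslope f a z
      rw [hfa, sub_zero] at h
      simpa [smul_eq_mul] using h.symm
    have hP' : ∀ b ∈ L, ∃ g : ℂ → ℂ, AnalyticAt ℂ g b ∧
        ∀ᶠ z in 𝓝[≠] b, f1 z = (z - b) ^ (L.count b) * g z := by
      intro b hb
      by_cases hba : b = a
      · subst hba
        refine ⟨g0, hg0, ?_⟩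
        filter_upwards [hev0, self_mem_nhdsWithin] with z hz hzb
        have hzb' : z - b ≠ 0 := sub_ne_zero.mpr hzb
        have : (z - b) * f1 z = (z - b) * ((z - b) ^ (L.count b) * g0 z) := by
          rw [← hglob z, hz]; ring
        exact mul_left_cancel₀ hzb' this
      · obtain ⟨g, hg, hev⟩ := hP b (List.mem_cons_of_mem a hb)
        have hcnt' : (a :: L).count b = L.count b := by
          rw [List.count_cons_of_ne]
          exact fun h => hba (by exact_mod_cast h.symm)
        rw [hcnt'] at hev
        refine ⟨fun z => (z - a)⁻¹ * g z, ?_, ?_⟩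
        · exact ((analyticAt_id.sub analyticAt_const).inv
            (sub_ne_zero.mpr hba)).mul hg
        · have hne : ∀ᶠ z in 𝓝[≠] b, z ≠ a := by
            apply eventually_nhdsWithin_of_eventually_nhds
            exact eventually_ne_nhds hba
          filter_upwards [hev, hne, self_mem_nhdsWithin] with z hz hza hzb
          have : f1 z = (z - a)⁻¹ * f z := by
            rw [hf1def, dslope_of_ne f hza, slope_def_field, hfa, sub_zero,
              div_eq_inv_mul]
          rw [this, hz]
          ring
    obtain ⟨g, hg, hfin⟩ := ih f1 hdf1 (fun b hb => hmem b (List.mem_cons_of_mem a hb)) hP'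
    refine ⟨g, hg, fun z => ?_⟩
    rw [List.map_cons, List.prod_cons, hglob z, hfin z]
    ring

/-- Cauchy estimate for iterated derivatives at the center. -/
lemma stmt17_cauchy {f : ℂ → ℂ} {R M : ℝ} (hR : 0 < R)
    (hc : ContinuousOn f (closedBall (0:ℂ) R))
    (hd : DifferentiableOn ℂ f (ball (0:ℂ) R))
    (hM : ∀ z ∈ sphere (0:ℂ) R, ‖f z‖ ≤ M) (j : ℕ) :
    ‖iteratedDeriv j f 0‖ ≤ (j)! * M / R ^ j := by
  have hM0 : 0 ≤ M := le_trans (norm_nonneg _)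
    (hM _ (circleMap_mem_sphere (0:ℂ) hR.le 0))
  set Rn : NNReal := ⟨R, hR.le⟩ with hRn
  have hball : HasFPowerSeriesOnBall f (cauchyPowerSeries f 0 Rn) 0 Rn :=
    Complex.hasFPowerSeriesOnBall_of_differentiable_off_countable
      (Set.countable_empty) (by exact_mod_cast hc)
      (fun z hz => hd.differentiableAt (isOpen_ball.mem_nhds (by exact_mod_cast hz.1)))
      (by exact_mod_cast hR)
  have hit := stmt17_l1 hball.hasFPowerSeriesAt j
  have hcont : Continuous fun θ : ℝ => ‖f (circleMap 0 R θ)‖ := by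
    refine (hc.comp_continuous (continuous_circleMap 0 R) ?_).norm
    exact fun θ => sphere_subset_closedBall (circleMap_mem_sphere (0:ℂ) hR.le θ)
  have hint : (∫ θ : ℝ in (0)..2 * Real.pi, ‖f (circleMap 0 R θ)‖) ≤ 2 * Real.pi * M := by
    have := intervalIntegral.integral_mono_on (by positivity : (0:ℝ) ≤ 2 * Real.pi)
      (hcont.intervalIntegrable 0 (2 * Real.pi))
      (intervalIntegrable_const (μ := MeasureTheory.volume) (c := M))
      (fun θ _ => hM _ (circleMap_mem_sphere (0:ℂ) hR.le θ))
    simpa using this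
  have hnorm : ‖(cauchyPowerSeries f 0 Rn).coeff j‖ ≤ M / R ^ j := by
    rw [← FormalMultilinearSeries.norm_apply_eq_norm_coef]
    have h1 := norm_cauchyPowerSeries_le f 0 Rn j
    have h2 : ((2 * Real.pi)⁻¹ * ∫ θ : ℝ in (0)..2 * Real.pi,
        ‖f (circleMap 0 (Rn:ℝ) θ)‖) * |(Rn:ℝ)|⁻¹ ^ j ≤ M / R ^ j := by
      have hRR : ((Rn:ℝ)) = R := rfl
      rw [hRR, abs_of_pos hR, div_eq_mul_inv, ← inv_pow]
      refine mul_le_mul_of_nonneg_right ?_ (by positivity)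
      rw [inv_mul_le_iff₀ (by positivity)]
      exact hint.trans (le_of_eq (by ring))
    exact h1.trans h2
  rw [hit]
  rw [norm_mul]
  have : ‖((j)! : ℂ)‖ = ((j)! : ℝ) := by
    simp [Complex.norm_natCast]
  rw [this, div_eq_mul_inv, mul_assoc, ← div_eq_mul_inv]
  have hj : (0:ℝ) ≤ ((j)! : ℝ) := by positivity
  calc ((j)! : ℝ) * ‖(cauchyPowerSeries f 0 Rn).coeff j‖
      ≤ ((j)! : ℝ) * (M / R ^ j) := mul_le_mul_of_nonneg_left hnorm hj
    _ = (j)! * (M / R ^ j) := rfl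

lemma stmt17_prod_le {w : ℂ} {c : ℝ} (hc : 0 ≤ c) :
    ∀ L : List ℂ, (∀ a ∈ L, ‖w - a‖ ≤ c) →
      ‖(L.map (fun a => w - a)).prod‖ ≤ c ^ L.length := by
  intro L
  induction L with
  | nil => intro _; simp
  | cons a L ih =>
    intro h
    rw [List.map_cons, List.prod_cons, List.length_cons, pow_succ']
    calc ‖(w - a) * (L.map (fun a => w - a)).prod‖
        = ‖w - a‖ * ‖(L.map (fun a => w - a)).prod‖ := norm_mul _ _
      _ ≤ c * c ^ L.length := by
          refine mul_le_mul (h a (List.mem_cons_self))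
            (ih (fun b hb => h b (List.mem_cons_of_mem a hb))) (norm_nonneg _) hc

lemma stmt17_le_prod {w : ℂ} {c : ℝ} (hc : 0 ≤ c) :
    ∀ L : List ℂ, (∀ a ∈ L, c ≤ ‖w - a‖) →
      c ^ L.length ≤ ‖(L.map (fun a => w - a)).prod‖ := by
  intro L
  induction L with
  | nil => intro _; simp
  | cons a L ih =>
    intro h
    rw [List.map_cons, List.prod_cons, List.length_cons, pow_succ']
    calc c * c ^ L.length
        ≤ ‖w - a‖ * ‖(L.map (fun a => w - a)).prod‖ := by
          refine mul_le_mul (h a (List.mem_cons_self))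
            (ih (fun b hb => h b (List.mem_cons_of_mem a hb))) (by positivity)
            (norm_nonneg _)
      _ = ‖(w - a) * (L.map (fun a => w - a)).prod‖ := (norm_mul _ _).symm

lemma stmt17_count_flatten (a : ℂ) :
    ∀ ls : List (List ℂ), ls.flatten.count a = (ls.map (fun l => l.count a)).sum := by
  intro ls
  induction ls with
  | nil => simp
  | cons l ls ih => simp [List.count_append, ih]

/-- For every `k` there is a universal `δ_k > 0` such that every `f`
holomorphic in the open unit disk, continuous on its closure, normalized by
`sup_𝔻 |f| = 1` and with `|f^{(k)}(0)| = s > 0`, has at most `k` zeros,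
counted with multiplicities, in the disk `{|z| < δ_k · s}`. -/
theorem stmt17 (k : ℕ) :
    ∃ δ : ℝ, 0 < δ ∧
      ∀ f : ℂ → ℂ, DifferentiableOn ℂ f (Metric.ball (0:ℂ) 1) →
        ContinuousOn f (Metric.closedBall (0:ℂ) 1) →
        sSup ((fun z => ‖f z‖) '' Metric.ball (0:ℂ) 1) = 1 →
        ∀ s : ℝ, 0 < s → ‖iteratedDeriv k f 0‖ = s →
        ∀ (m : ℕ) (z : Fin m → ℂ) (μ : Fin m → ℕ),
          Function.Injective z → (∀ i, z i ∈ Metric.ball (0:ℂ) (δ * s)) →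
          (∀ i, 1 ≤ μ i) →
          (∀ i, ∀ j < μ i, iteratedDeriv j f (z i) = 0) →
          ∑ i, μ i ≤ k := by
  have hfact : (0:ℝ) < (k)! := by positivity
  refine ⟨((k)! * 16 ^ (k + 2) : ℝ)⁻¹, by positivity, ?_⟩
  intro f hd hcont hsup s hs hks m z μ hzinj hzball hμ1 hvan
  by_contra hk
  push_neg at hk
  set δ : ℝ := ((k)! * 16 ^ (k + 2) : ℝ)⁻¹ with hδdef
  have hδ0 : 0 < δ := by positivity
  set r : ℝ := δ * s with hrdef
  have hr0 : 0 < r := by positivity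
  -- |f| ≤ 1 on the ball
  have habs : ∀ w ∈ ball (0:ℂ) 1, ‖f w‖ ≤ 1 := by
    intro w hw
    have hbdd : BddAbove ((fun z => ‖f z‖) '' ball (0:ℂ) 1) := by
      have hcomp : IsCompact ((fun z => ‖f z‖) '' closedBall (0:ℂ) 1) :=
        (isCompact_closedBall _ _).image_of_continuousOn
          (continuous_norm.comp_continuousOn hcont)
      exact hcomp.bddAbove.mono (Set.image_mono ball_subset_closedBall)
    have h := le_csSup hbdd (Set.mem_image_of_mem _ hw)
    rw [hsup] at h
    exact h
  -- first Cauchy estimate: s ≤ k! * 2^k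
  have hs2 : s ≤ (k)! * 2 ^ k := by
    have h12 : (0:ℝ) < 1/2 := by norm_num
    have := stmt17_cauchy h12
      (hcont.mono (closedBall_subset_closedBall (by norm_num)))
      (hd.mono (ball_subset_ball (by norm_num)))
      (fun w hw => habs w (by
        have : ‖w‖ = 1/2 := by simpa using hw
        simp only [mem_ball, dist_zero_right]
        rw [this]; norm_num)) k
    rw [← hks]
    calc ‖iteratedDeriv k f 0‖ ≤ (k)! * 1 / (1/2) ^ k := this
      _ = (k)! * 2 ^ k := by
          rw [div_pow, mul_one, one_pow, div_div_eq_mul_div, div_one]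
  have hr16 : r ≤ 1 / 16 := by
    have h1 : r ≤ δ * ((k)! * 2 ^ k) := by
      exact mul_le_mul_of_nonneg_left hs2 hδ0.le
    have h2 : δ * ((k)! * 2 ^ k) ≤ 1 / 16 := by
      rw [hδdef]
      rw [inv_mul_le_iff₀ (by positivity)]
      have : (2:ℝ) ^ k * 16 ≤ 16 ^ (k + 2) := by
        have h2k : (2:ℝ) ^ k ≤ 16 ^ (k + 1) := by
          calc (2:ℝ) ^ k ≤ 16 ^ k := pow_le_pow_left₀ (by norm_num) (by norm_num) k
            _ ≤ 16 ^ (k + 1) := pow_le_pow_right₀ (by norm_num) (by omega)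
        calc (2:ℝ) ^ k * 16 ≤ 16 ^ (k + 1) * 16 := by nlinarith
          _ = 16 ^ (k + 2) := by ring
      nlinarith [hfact]
    linarith
  have hr1 : r < 1 := by linarith
  -- the list of zeros with multiplicity
  set L : List ℂ := (List.ofFn fun i => List.replicate (μ i) (z i)).flatten with hLdef
  have hlen : L.length = ∑ i, μ i := by
    rw [hLdef, List.length_flatten, List.map_ofFn, List.sum_ofFn]
    simp
  have hmemL : ∀ a ∈ L, ∃ i, a = z i := by
    intro a ha
    rw [hLdef, List.mem_flatten] at ha
    obtain ⟨l, hl, hal⟩ := ha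
    rw [List.mem_ofFn] at hl
    obtain ⟨i, rfl⟩ := hl
    exact ⟨i, List.eq_of_mem_replicate hal⟩
  have hcountL : ∀ i, L.count (z i) = μ i := by
    intro i
    rw [hLdef, stmt17_count_flatten, List.map_ofFn]
    have heq : ∀ j : Fin m, ((List.replicate (μ j) (z j)).count (z i))
        = if j = i then μ j else 0 := by
      intro j
      rw [List.count_replicate]
      by_cases h : j = i
      · subst h; simp
      · have : ¬ (z j = z i) := fun hc => h (hzinj hc)
        simp [this, h, beq_iff_eq]
    calc (List.ofFn fun j => (List.replicate (μ j) (z j)).count (z i)).sum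
        = (List.ofFn fun j => if j = i then μ j else 0).sum := by
          congr 1
          exact congrArg List.ofFn (funext heq)
      _ = ∑ j : Fin m, (if j = i then μ j else 0) := List.sum_ofFn
      _ = μ i := by rw [Finset.sum_ite_eq' Finset.univ i μ]; simp
  have hmemball : ∀ a ∈ L, a ∈ ball (0:ℂ) r := by
    intro a ha
    obtain ⟨i, rfl⟩ := hmemL a ha
    exact hzball i
  have hmemball1 : ∀ a ∈ L, a ∈ ball (0:ℂ) 1 := fun a ha =>
    ball_subset_ball hr1.le (hmemball a ha)
  -- factorization
  obtain ⟨g, hg, heq⟩ := stmt17_factor L f hd hmemball1 (by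
    intro a ha
    obtain ⟨i, rfl⟩ := hmemL a ha
    refine stmt17_bridge (L.count (z i)) (hd.analyticAt
      (isOpen_ball.mem_nhds (hmemball1 _ ha))) ?_
    intro j hj
    exact hvan i j (by rw [hcountL i] at hj; exact hj))
  set n : ℕ := L.length with hn
  have hnk : k + 1 ≤ n := by rw [hlen]; omega
  -- bound for g on the closed ball of radius 1/2
  have hgb : ∀ w ∈ closedBall (0:ℂ) (1/2), ‖g w‖ ≤ 4 ^ n := by
    intro w hw
    have hfr : frontier (ball (0:ℂ) (1/2)) = sphere (0:ℂ) (1/2) :=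
      frontier_ball (0:ℂ) (by norm_num)
    refine Complex.norm_le_of_forall_mem_frontier_norm_le isBounded_ball
      ⟨hg.mono (ball_subset_ball (by norm_num : (1:ℝ)/2 ≤ 1)),
       (hg.continuousOn.mono (by
          rw [closure_ball (0:ℂ) (by norm_num : (1/2:ℝ) ≠ 0)]
          exact closedBall_subset_ball (by norm_num)))⟩ ?_ ?_
    · intro w' hw'
      rw [hfr] at hw'
      have hwn : ‖w'‖ = 1/2 := by simpa using hw'
      have hlow : ((1:ℝ)/4) ^ n ≤ ‖(L.map (fun a => w' - a)).prod‖ := by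
        refine stmt17_le_prod (by norm_num) L ?_
        intro a ha
        have haw : ‖a‖ < r := by simpa using hmemball a ha
        calc (1:ℝ)/4 ≤ 1/2 - r := by linarith
          _ ≤ ‖w'‖ - ‖a‖ := by rw [hwn]; linarith
          _ ≤ ‖w' - a‖ := norm_sub_norm_le _ _
      have hprodpos : (0:ℝ) < ‖(L.map (fun a => w' - a)).prod‖ :=
        lt_of_lt_of_le (by positivity) hlow
      have hfw : ‖f w'‖ ≤ 1 := habs w' (by
        simp only [mem_ball, dist_zero_right]; rw [hwn]; norm_num)
      have hgw : ‖g w'‖ = ‖f w'‖ / ‖(L.map (fun a => w' - a)).prod‖ := by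
        rw [heq w', norm_mul]
        rw [mul_comm, mul_div_assoc, div_self (ne_of_gt hprodpos), mul_one]
      rw [hgw]
      calc ‖f w'‖ / ‖(L.map (fun a => w' - a)).prod‖
          ≤ 1 / ((1:ℝ)/4) ^ n := div_le_div₀ (by norm_num) hfw (by positivity) hlow
        _ = 4 ^ n := by
            rw [one_div, div_pow, one_pow, one_div, inv_inv]
    · rw [closure_ball (0:ℂ) (by norm_num : (1/2:ℝ) ≠ 0)]
      exact hw
  -- |f| ≤ (8r)^n on the sphere of radius r
  have hfsphere : ∀ w ∈ sphere (0:ℂ) r, ‖f w‖ ≤ (8*r) ^ n := by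
    intro w hw
    have hwn : ‖w‖ = r := by simpa using hw
    have hup : ‖(L.map (fun a => w - a)).prod‖ ≤ (2*r) ^ n := by
      refine stmt17_prod_le (by positivity) L ?_
      intro a ha
      have haw : ‖a‖ < r := by simpa using hmemball a ha
      calc ‖w - a‖ ≤ ‖w‖ + ‖a‖ := norm_sub_le _ _
        _ ≤ 2 * r := by rw [hwn]; linarith
    have hgball : ‖g w‖ ≤ 4 ^ n := hgb w (by
      simp only [mem_closedBall, dist_zero_right]; rw [hwn]; linarith)
    calc ‖f w‖ = ‖(L.map (fun a => w - a)).prod‖ * ‖g w‖ := by rw [heq w, norm_mul]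
      _ ≤ (2*r) ^ n * 4 ^ n := by
          exact mul_le_mul hup hgball (norm_nonneg _) (by positivity)
      _ = (8*r) ^ n := by rw [← mul_pow]; ring_nf
  -- second Cauchy estimate
  have hcauchy2 : s ≤ (k)! * (8*r) ^ n / r ^ k := by
    have := stmt17_cauchy hr0
      (hcont.mono (closedBall_subset_closedBall hr1.le))
      (hd.mono (ball_subset_ball hr1.le)) hfsphere k
    rw [← hks]
    exact this
  -- final contradiction
  have h8r : 8 * r ≤ 1 := by linarith
  have hpow : (8*r) ^ n ≤ (8*r) ^ (k+1) :=
    pow_le_pow_of_le_one (by positivity) h8r hnk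
  have hfinal : s ≤ (k)! * 8 ^ (k+1) * r := by
    calc s ≤ (k)! * (8*r) ^ n / r ^ k := hcauchy2
      _ ≤ (k)! * (8*r) ^ (k+1) / r ^ k := by
          apply div_le_div_of_nonneg_right ?_ (by positivity)
          exact mul_le_mul_of_nonneg_left hpow hfact.le
      _ = (k)! * 8 ^ (k+1) * r := by
          rw [mul_pow]
          field_simp
          ring
  have hcontr : (k)! * 8 ^ (k+1) * r < s := by
    have hr8 : (k)! * 8 ^ (k+1) * r = (8:ℝ) ^ (k+1) / 16 ^ (k+2) * s := by
      rw [hrdef, hδdef]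
      field_simp
    rw [hr8]
    have : (8:ℝ) ^ (k+1) / 16 ^ (k+2) < 1 := by
      rw [div_lt_one (by positivity)]
      calc (8:ℝ) ^ (k+1) ≤ 16 ^ (k+1) := pow_le_pow_left₀ (by norm_num) (by norm_num) _
        _ < 16 ^ (k+2) := pow_lt_pow_right₀ (by norm_num) (by omega)
    nlinarith
  linarith
end
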